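/- For integers n and a with 3 ≤ a ≤ n − 2, the graph F obtained from a path u_0, u_1, ..., u_{n−a} by adding a−1 new vertices v_1, ..., v_{a−1} each adjacent to both u_0 and u_1 has order n, monophonic position number a, and diameter n − a. -/

import Mathlib

open SimpleGraph

/-- A walk is an *induced (monophonic) path* if it is a path and vertices on the
walk are adjacent in `G` exactly when they are consecutive on the walk. -/
def IsInducedPathW {V : Type*} (G : SimpleGraph V) {u v : V} (p : G.Walk u v) : Prop :=
  p.IsPath ∧ ∀ a b : V, a ∈ p.support → b ∈ p.support → (G.Adj a b ↔ p.toSubgraph.Adj a b)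

/-- A walk is a *geodesic* if it is a shortest path between its endpoints. -/
def IsGeodesicW {V : Type*} (G : SimpleGraph V) {u v : V} (p : G.Walk u v) : Prop :=
  p.IsPath ∧ p.length = G.dist u v

/-- A set of vertices is in *monophonic position* if no induced path of `G`
contains more than two of its vertices. -/
def IsMpSet {V : Type*} (G : SimpleGraph V) (S : Set V) : Prop :=
  ∀ ⦃u v : V⦄ (p : G.Walk u v), IsInducedPathW G p → (S ∩ {x | x ∈ p.support}).ncard ≤ 2

/-- A set of vertices is in *general position* if no geodesic of `G` contains
more than two of its vertices. -/
def IsGpSet {V : Type*} (G : SimpleGraph V) (S : Set V) : Prop :=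
  ∀ ⦃u v : V⦄ (p : G.Walk u v), IsGeodesicW G p → (S ∩ {x | x ∈ p.support}).ncard ≤ 2

/-- The monophonic position number `mp(G)`. -/
noncomputable def mpNum {V : Type*} (G : SimpleGraph V) : ℕ :=
  sSup {n | ∃ S : Set V, IsMpSet G S ∧ S.ncard = n}

/-- The general position number `gp(G)`. -/
noncomputable def gpNum {V : Type*} (G : SimpleGraph V) : ℕ :=
  sSup {n | ∃ S : Set V, IsGpSet G S ∧ S.ncard = n}

/-- The graph `F(n,a,n-a)`: a path `u₀, u₁, …, u_{n-a}` together with `a - 1`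
new vertices each adjacent to both `u₀` and `u₁`. -/
def flagellumGraph (n a : ℕ) : SimpleGraph (Fin (n - a + 1) ⊕ Fin (a - 1)) :=
  SimpleGraph.fromRel fun u v =>
    match u, v with
    | .inl i, .inl j => (i : ℕ) + 1 = (j : ℕ)
    | .inr _, .inl i => (i : ℕ) = 0 ∨ (i : ℕ) = 1
    | _, _ => False

namespace Flag
open SimpleGraph Walk

def myGraph (M B : ℕ) : SimpleGraph (Fin (M + 1) ⊕ Fin B) :=
  SimpleGraph.fromRel fun u v =>
    match u, v with
    | .inl i, .inl j => (i : ℕ) + 1 = (j : ℕ)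
    | .inr _, .inl i => (i : ℕ) = 0 ∨ (i : ℕ) = 1
    | _, _ => False

variable {M B : ℕ}

lemma adj_inl_inl {i j : Fin (M+1)} :
    (myGraph M B).Adj (.inl i) (.inl j) ↔ (i : ℕ) + 1 = j ∨ (j : ℕ) + 1 = i := by
  simp only [myGraph, fromRel_adj]
  constructor
  · rintro ⟨-, h⟩; exact h
  · intro h
    refine ⟨?_, h⟩
    intro he; injection he with he; apply_fun Fin.val at he; omega

lemma adj_inr_inl {v : Fin B} {i : Fin (M+1)} :
    (myGraph M B).Adj (.inr v) (.inl i) ↔ (i : ℕ) = 0 ∨ (i : ℕ) = 1 := by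
  simp only [myGraph, fromRel_adj]
  constructor
  · rintro ⟨-, h | h⟩
    · exact h
    · exact h.elim
  · intro h; exact ⟨by simp, Or.inl h⟩

lemma adj_inl_inr {v : Fin B} {i : Fin (M+1)} :
    (myGraph M B).Adj (.inl i) (.inr v) ↔ (i : ℕ) = 0 ∨ (i : ℕ) = 1 := by
  rw [adj_comm]; exact adj_inr_inl

lemma not_adj_inr_inr {v w : Fin B} : ¬ (myGraph M B).Adj (.inr v) (.inr w) := by
  simp [myGraph, fromRel_adj]

lemma toSubgraph_copy {V : Type*} {G : SimpleGraph V} {u v u' v' : V}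
    (p : G.Walk u v) (hu : u = u') (hv : v = v') :
    (p.copy hu hv).toSubgraph = p.toSubgraph := by subst hu hv; rfl

def chain (M B : ℕ) : (k i : ℕ) → (h : i + k < M + 1) →
    (myGraph M B).Walk (.inl ⟨i, by omega⟩) (.inl ⟨i + k, h⟩)
  | 0, i, h => Walk.nil
  | (k+1), i, h =>
      Walk.cons (u := .inl ⟨i, by omega⟩) (v := .inl ⟨i+1, by omega⟩)
        (adj_inl_inl.mpr (Or.inl rfl))
        ((chain M B k (i+1) (by omega)).copy rfl
          (congrArg Sum.inl (Fin.ext (by simp; omega))))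

lemma chain_length (k i : ℕ) (h : i + k < M + 1) : (chain M B k i h).length = k := by
  induction k generalizing i with
  | zero => rfl
  | succ k ih => simp [chain, ih]

lemma chain_support (k i : ℕ) (h : i + k < M + 1) (x : Fin (M+1) ⊕ Fin B) :
    x ∈ (chain M B k i h).support ↔
      ∃ j : Fin (M+1), x = .inl j ∧ i ≤ (j : ℕ) ∧ (j : ℕ) ≤ i + k := by
  induction k generalizing i with
  | zero =>
    simp only [chain, support_nil, List.mem_singleton]
    constructor
    · rintro rfl; exact ⟨_, rfl, by simp, by simp⟩
    · rintro ⟨j, rfl, h1, h2⟩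
      have : (j : ℕ) = i := by omega
      congr 1; exact Fin.ext (by simpa using this)
  | succ k ih =>
    simp only [chain, support_cons, support_copy, List.mem_cons, ih]
    constructor
    · rintro (rfl | ⟨j, rfl, h1, h2⟩)
      · exact ⟨_, rfl, by simp, by simp⟩
      · exact ⟨j, rfl, by omega, by omega⟩
    · rintro ⟨j, rfl, h1, h2⟩
      rcases Nat.eq_or_lt_of_le h1 with heq | hlt
      · left; congr 1; exact Fin.ext (by simp; omega)
      · right; exact ⟨j, rfl, by omega, by omega⟩

lemma chain_isPath (k i : ℕ) (h : i + k < M + 1) : (chain M B k i h).IsPath := by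
  induction k generalizing i with
  | zero => exact IsPath.nil
  | succ k ih =>
    rw [chain, cons_isPath_iff]
    refine ⟨(isPath_copy _ _ _).mpr (ih _ _), ?_⟩
    rw [support_copy, chain_support]
    rintro ⟨j, hj, h1, h2⟩
    injection hj with hj; apply_fun Fin.val at hj; simp at hj; omega

lemma chain_sub_adj (k i : ℕ) (h : i + k < M + 1) (j₁ j₂ : Fin (M+1))
    (hj : i ≤ (j₁ : ℕ)) (hc : (j₁ : ℕ) + 1 = j₂) (hk : (j₂ : ℕ) ≤ i + k) :
    (chain M B k i h).toSubgraph.Adj (.inl j₁) (.inl j₂) := by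
  induction k generalizing i with
  | zero => omega
  | succ k ih =>
    rw [chain]
    simp only [Walk.toSubgraph, Subgraph.sup_adj, toSubgraph_copy]
    rcases Nat.eq_or_lt_of_le hj with heq | hlt
    · left
      have hi : i < M + 1 := by omega
      have hi1 : i + 1 < M + 1 := by clear hi; omega
      have e1 : j₁ = (⟨i, hi⟩ : Fin (M+1)) := Fin.ext (by simp; omega)
      have e2 : j₂ = (⟨i+1, hi1⟩ : Fin (M+1)) := Fin.ext (by simp; omega)
      subst e1; subst e2
      show s(_,_) = s(_,_); rfl
    · right; exact ih _ (by omega) (by omega) (by omega)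

lemma induced_tail {V : Type*} {G : SimpleGraph V} {s s' t : V} {h : G.Adj s s'}
    {q : G.Walk s' t} (hp : IsInducedPathW G (Walk.cons h q)) : IsInducedPathW G q := by
  obtain ⟨hpath, hind⟩ := hp
  obtain ⟨hq, hs⟩ := (Walk.cons_isPath_iff h q).mp hpath
  refine ⟨hq, fun a b ha hb => ?_⟩
  rw [hind a b (by simp [ha]) (by simp [hb])]
  constructor
  · intro had
    simp only [Walk.toSubgraph, Subgraph.sup_adj] at had
    rcases had with had | had
    · rw [subgraphOfAdj_adj, Sym2.eq_iff] at had
      rcases had with ⟨h1, -⟩ | ⟨h1, -⟩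
      · exact absurd (h1 ▸ ha) hs
      · exact absurd (h1 ▸ hb) hs
    · exact had
  · intro had
    simp only [Walk.toSubgraph, Subgraph.sup_adj]
    exact Or.inr had

lemma endpoint_of_induced {V : Type*} {G : SimpleGraph V} {s t : V} (p : G.Walk s t) :
    IsInducedPathW G p → ∀ {c : V}, c ∈ p.support →
    (∀ x y, G.Adj c x → G.Adj c y → x ≠ y → G.Adj x y) → c = s ∨ c = t := by
  induction p with
  | nil => intro _ c hc _; left; simpa using hc
  | @cons u v w h q ih =>
    intro hp c hc H
    rw [support_cons, List.mem_cons] at hc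
    rcases hc with rfl | hc
    · exact Or.inl rfl
    rcases ih (induced_tail hp) hc H with rfl | rfl
    · -- c is the second vertex of p
      cases q with
      | nil => exact Or.inr rfl
      | @cons _ v₂ _ h' r =>
        exfalso
        have hu_notin : u ∉ (Walk.cons h' r).support :=
          ((Walk.cons_isPath_iff h (Walk.cons h' r)).mp hp.1).2
        have hc_notin : c ∉ r.support :=
          ((Walk.cons_isPath_iff h' r).mp
            ((Walk.cons_isPath_iff h (Walk.cons h' r)).mp hp.1).1).2
        have hv₂_mem : v₂ ∈ r.support := r.start_mem_support
        have hne : u ≠ v₂ := fun he => hu_notin (by simp [he, hv₂_mem])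
        have hadj : G.Adj u v₂ := H u v₂ h.symm h' hne
        have hsub : (Walk.cons h (Walk.cons h' r)).toSubgraph.Adj u v₂ :=
          (hp.2 u v₂ (by simp) (by simp [hv₂_mem])).mp hadj
        simp only [Walk.toSubgraph, Subgraph.sup_adj] at hsub
        rcases hsub with hsub | hsub | hsub
        · rw [subgraphOfAdj_adj, Sym2.eq_iff] at hsub
          rcases hsub with ⟨-, h2⟩ | ⟨h1, -⟩
          · exact hc_notin (h2 ▸ hv₂_mem)
          · exact hne h1
        · rw [subgraphOfAdj_adj, Sym2.eq_iff] at hsub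
          rcases hsub with ⟨h1, -⟩ | ⟨-, h2⟩
          · exact h.ne h1.symm
          · exact hne h2.symm
        · exact hu_notin (by simp [(Walk.mem_verts_toSubgraph r).mp hsub.fst_mem])
    · exact Or.inr rfl

/-- Every vertex of `inr` type can only be an endpoint of an induced path. -/
lemma H_inr (hM : 1 ≤ M) (v : Fin B) :
    ∀ x y, (myGraph M B).Adj (.inr v) x → (myGraph M B).Adj (.inr v) y → x ≠ y →
      (myGraph M B).Adj x y := by
  rintro (i | w) (j | w') hx hy hne
  · rw [adj_inr_inl] at hx hy
    rw [adj_inl_inl]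
    have : (i : ℕ) ≠ (j : ℕ) := fun he => hne (by congr 1; exact Fin.ext he)
    omega
  · exact absurd hy not_adj_inr_inr
  · exact absurd hx not_adj_inr_inr
  · exact absurd hx not_adj_inr_inr

lemma H_last (hM : 2 ≤ M) :
    ∀ x y, (myGraph M B).Adj (.inl (Fin.last M)) x → (myGraph M B).Adj (.inl (Fin.last M)) y →
      x ≠ y → (myGraph M B).Adj x y := by
  have hval : ∀ x, (myGraph M B).Adj (.inl (Fin.last M)) x → x = .inl ⟨M - 1, by omega⟩ := by
    rintro (i | w) hx
    · rw [adj_inl_inl] at hx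
      simp only [Fin.val_last] at hx
      congr 1
      exact Fin.ext (by simp; omega)
    · rw [adj_inl_inr] at hx
      simp only [Fin.val_last] at hx
      omega
  intro x y hx hy hne
  exact absurd ((hval x hx).trans (hval y hy).symm) hne

lemma isMpSet_lower (hM : 2 ≤ M) :
    IsMpSet (myGraph M B) (Set.range Sum.inr ∪ {Sum.inl (Fin.last M)}) := by
  intro u v p hp
  have hsub : (Set.range Sum.inr ∪ {Sum.inl (Fin.last M)}) ∩ {x | x ∈ p.support} ⊆ {u, v} := by
    rintro x ⟨hx1, hx2⟩
    have hH : ∀ a b, (myGraph M B).Adj x a → (myGraph M B).Adj x b → a ≠ b →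
        (myGraph M B).Adj a b := by
      rcases hx1 with ⟨w, rfl⟩ | rfl
      · exact H_inr (by omega) w
      · exact H_last hM
    rcases endpoint_of_induced p hp hx2 hH with rfl | rfl
    · exact Set.mem_insert _ _
    · exact Set.mem_insert_of_mem _ rfl
  calc (_ : Set _).ncard ≤ ({u, v} : Set _).ncard := Set.ncard_le_ncard hsub (Set.toFinite _)
    _ ≤ 2 := Set.ncard_insert_le _ _ |>.trans (by simp)

noncomputable def chainIJ (M B : ℕ) (i j : Fin (M+1)) (hij : (i : ℕ) ≤ j) :
    (myGraph M B).Walk (.inl i) (.inl j) :=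
  (chain M B ((j : ℕ) - i) i (by have := j.isLt; omega)).copy
    (congrArg Sum.inl (Fin.ext rfl))
    (congrArg Sum.inl (Fin.ext (by simp; omega)))

lemma chainIJ_length {i j : Fin (M+1)} (hij : (i : ℕ) ≤ j) :
    (chainIJ M B i j hij).length = (j : ℕ) - i := by
  simp [chainIJ, chain_length]

lemma chainIJ_support {i j : Fin (M+1)} (hij : (i : ℕ) ≤ j) (x : Fin (M+1) ⊕ Fin B) :
    x ∈ (chainIJ M B i j hij).support ↔
      ∃ jj : Fin (M+1), x = .inl jj ∧ (i : ℕ) ≤ jj ∧ (jj : ℕ) ≤ j := by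
  rw [chainIJ, support_copy, chain_support]
  constructor
  · rintro ⟨jj, rfl, h1, h2⟩; exact ⟨jj, rfl, h1, by omega⟩
  · rintro ⟨jj, rfl, h1, h2⟩; exact ⟨jj, rfl, h1, by omega⟩

lemma chainIJ_induced {i j : Fin (M+1)} (hij : (i : ℕ) ≤ j) :
    IsInducedPathW (myGraph M B) (chainIJ M B i j hij) := by
  refine ⟨(isPath_copy _ _ _).mpr (chain_isPath _ _ _), fun a b ha hb => ?_⟩
  constructor
  · intro hadj
    rw [chainIJ_support] at ha hb
    obtain ⟨j₁, rfl, h1, h2⟩ := ha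
    obtain ⟨j₂, rfl, h3, h4⟩ := hb
    rw [adj_inl_inl] at hadj
    rw [chainIJ, toSubgraph_copy]
    rcases hadj with hc | hc
    · exact chain_sub_adj _ _ _ j₁ j₂ h1 hc (by omega)
    · exact (chain_sub_adj _ _ _ j₂ j₁ h3 hc (by omega)).symm
  · exact fun hadj => Subgraph.adj_sub _ hadj

/-- The long path `u₁ - u₂ - ⋯ - u_M` prefixed by `v`. -/
noncomputable def qWalk (M B : ℕ) (hM : 2 ≤ M) (v : Fin B) :
    (myGraph M B).Walk (.inr v) (.inl (Fin.last M)) :=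
  Walk.cons (adj_inr_inl.mpr (Or.inr rfl))
    (chainIJ M B ⟨1, by omega⟩ (Fin.last M) (by show (1:ℕ) ≤ M; omega))

lemma qWalk_support (hM : 2 ≤ M) (v : Fin B) (x : Fin (M+1) ⊕ Fin B) :
    x ∈ (qWalk M B hM v).support ↔
      x = .inr v ∨ ∃ jj : Fin (M+1), x = .inl jj ∧ 1 ≤ (jj : ℕ) := by
  rw [qWalk, support_cons, List.mem_cons, chainIJ_support]
  constructor
  · rintro (rfl | ⟨jj, rfl, h1, h2⟩)
    · exact Or.inl rfl
    · exact Or.inr ⟨jj, rfl, h1⟩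
  · rintro (rfl | ⟨jj, rfl, h1⟩)
    · exact Or.inl rfl
    · refine Or.inr ⟨jj, rfl, h1, ?_⟩
      show (jj : ℕ) ≤ M
      omega

lemma qWalk_induced (hM : 2 ≤ M) (v : Fin B) :
    IsInducedPathW (myGraph M B) (qWalk M B hM v) := by
  constructor
  · rw [qWalk, cons_isPath_iff]
    refine ⟨(chainIJ_induced _).1, ?_⟩
    rw [chainIJ_support]
    rintro ⟨jj, h, -, -⟩
    exact absurd h (by simp)
  · intro a b ha hb
    constructor
    · intro hadj
      rw [qWalk, support_cons, List.mem_cons] at ha hb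
      have hone : ∀ c, c ∈ (chainIJ M B (⟨1, by omega⟩ : Fin (M+1)) (Fin.last M)
          (by show (1:ℕ) ≤ M; omega)).support → (myGraph M B).Adj (.inr v) c →
          c = .inl ⟨1, by omega⟩ := by
        intro c hc hadj'
        rw [chainIJ_support] at hc
        obtain ⟨jj, rfl, h1, -⟩ := hc
        have h1' : (1 : ℕ) ≤ (jj : ℕ) := h1
        rw [adj_inr_inl] at hadj'
        congr 1
        exact Fin.ext (show (jj : ℕ) = 1 by omega)
      rcases ha with rfl | ha <;> rcases hb with rfl | hb
      · exact absurd hadj not_adj_inr_inr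
      · -- a = inr v, b in chain
        have hb1 := hone b hb hadj
        subst hb1
        rw [qWalk]
        simp only [Walk.toSubgraph, Subgraph.sup_adj]
        left
        show s(_,_) = s(_,_); rfl
      · have ha1 := hone a ha hadj.symm
        subst ha1
        rw [qWalk]
        simp only [Walk.toSubgraph, Subgraph.sup_adj]
        left
        show s(_,_) = s(_,_); exact Sym2.eq_swap
      · rw [qWalk]
        simp only [Walk.toSubgraph, Subgraph.sup_adj]
        right
        exact ((chainIJ_induced _).2 a b ha hb).mp hadj
    · exact fun hadj => Subgraph.adj_sub _ hadj

/-- The path `v - u₀ - w`. -/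
noncomputable def rWalk (M B : ℕ) (v w : Fin B) : (myGraph M B).Walk (.inr v) (.inr w) :=
  Walk.cons (v := Sum.inl ⟨0, M.succ_pos⟩) (adj_inr_inl.mpr (Or.inl rfl))
    (Walk.cons (adj_inl_inr.mpr (Or.inl rfl)) Walk.nil)

lemma rWalk_support (v w : Fin B) (x : Fin (M+1) ⊕ Fin B) :
    x ∈ (rWalk M B v w).support ↔ x = .inr v ∨ x = .inl ⟨0, by omega⟩ ∨ x = .inr w := by
  simp only [rWalk, support_cons, support_nil, List.mem_cons, List.mem_singleton,
    List.not_mem_nil, or_false]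

lemma rWalk_induced (v w : Fin B) (hvw : v ≠ w) :
    IsInducedPathW (myGraph M B) (rWalk M B v w) := by
  constructor
  · rw [rWalk, cons_isPath_iff, cons_isPath_iff]
    refine ⟨⟨IsPath.nil, by simp⟩, ?_⟩
    simp only [support_cons, support_nil, List.mem_cons, List.mem_singleton]
    rintro (h | h | h)
    · exact absurd h (by simp)
    · simp at h; exact hvw h
    · simp at h
  · intro a b ha hb
    rw [rWalk_support] at ha hb
    constructor
    · intro hadj
      simp only [rWalk, Walk.toSubgraph, Subgraph.sup_adj]
      rcases ha with rfl | rfl | rfl <;> rcases hb with rfl | rfl | rfl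
      · exact absurd hadj not_adj_inr_inr
      · left; show s(_,_) = s(_,_); rfl
      · exact absurd hadj not_adj_inr_inr
      · left; show s(_,_) = s(_,_); exact Sym2.eq_swap
      · exact absurd hadj (myGraph M B).irrefl
      · right; left; show s(_,_) = s(_,_); rfl
      · exact absurd hadj not_adj_inr_inr
      · right; left; show s(_,_) = s(_,_); exact Sym2.eq_swap
      · exact absurd hadj not_adj_inr_inr
    · exact fun hadj => Subgraph.adj_sub _ hadj

lemma ncard_range_inr : (Set.range (Sum.inr : Fin B → Fin (M+1) ⊕ Fin B)).ncard = B := by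
  rw [← Nat.card_coe_set_eq, Nat.card_range_of_injective Sum.inr_injective,
    Nat.card_eq_fintype_card, Fintype.card_fin]

lemma mpSet_card_le (hM : 2 ≤ M) (hB : 2 ≤ B) (S : Set (Fin (M+1) ⊕ Fin B))
    (hS : IsMpSet (myGraph M B) S) : S.ncard ≤ B + 1 := by
  classical
  set A := S ∩ Set.range (Sum.inl : Fin (M+1) → Fin (M+1) ⊕ Fin B) with hA
  set Bs := S ∩ Set.range (Sum.inr : Fin B → Fin (M+1) ⊕ Fin B) with hBs
  have hcover : S ⊆ A ∪ Bs := by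
    rintro (i | w) hx
    · exact Or.inl ⟨hx, ⟨i, rfl⟩⟩
    · exact Or.inr ⟨hx, ⟨w, rfl⟩⟩
  have hcard : S.ncard ≤ A.ncard + Bs.ncard :=
    (Set.ncard_le_ncard hcover (Set.toFinite _)).trans (Set.ncard_union_le _ _)
  have hBle : Bs.ncard ≤ B := by
    refine le_trans (Set.ncard_le_ncard Set.inter_subset_right (Set.toFinite _)) ?_
    rw [ncard_range_inr]
  -- helper : if `inr v ∈ S` then `A \ {u₀}` has at most one element
  have hAv : ∀ v : Fin B, Sum.inr v ∈ S →
      (A \ {Sum.inl ⟨0, by omega⟩}).ncard ≤ 1 := by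
    intro v hv
    have hT := hS (qWalk M B hM v) (qWalk_induced hM v)
    set T := S ∩ {x | x ∈ (qWalk M B hM v).support} with hTdef
    have hsub : insert (Sum.inr v) (A \ {Sum.inl ⟨0, by omega⟩}) ⊆ T := by
      rintro x (rfl | ⟨⟨hxS, j, rfl⟩, hx0⟩)
      · exact ⟨hv, (qWalk_support hM v _).mpr (Or.inl rfl)⟩
      · refine ⟨hxS, (qWalk_support hM v _).mpr (Or.inr ⟨j, rfl, ?_⟩)⟩
        rcases Nat.eq_zero_or_pos (j : ℕ) with h0 | h1
        · exact absurd (by simp only [Set.mem_singleton_iff]; congr 1; exact Fin.ext h0) hx0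
        · exact h1
    have hnotmem : Sum.inr v ∉ A \ {Sum.inl ⟨0, by omega⟩} := by
      rintro ⟨⟨-, j, hj⟩, -⟩; exact absurd hj (by simp)
    have := Set.ncard_le_ncard hsub (Set.toFinite _)
    rw [Set.ncard_insert_of_notMem hnotmem (Set.toFinite _)] at this
    omega
  by_cases hB2 : 1 < Bs.ncard
  · -- at least two legs in S
    obtain ⟨x, hx, y, hy, hxy⟩ := (Set.one_lt_ncard (Set.toFinite _)).mp hB2
    obtain ⟨hxS, v, rfl⟩ := hx
    obtain ⟨hyS, w, rfl⟩ := hy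
    have hvw : v ≠ w := fun h => hxy (by rw [h])
    have hu0 : Sum.inl (⟨0, by omega⟩ : Fin (M+1)) ∉ S := by
      intro h0
      have hT := hS (rWalk M B v w) (rWalk_induced v w hvw)
      have hsub : ({Sum.inr v, Sum.inl ⟨0, by omega⟩, Sum.inr w} : Set _) ⊆
          S ∩ {x | x ∈ (rWalk M B v w).support} := by
        rintro x (rfl | rfl | rfl)
        · exact ⟨hxS, (rWalk_support v w _).mpr (Or.inl rfl)⟩
        · exact ⟨h0, (rWalk_support v w _).mpr (Or.inr (Or.inl rfl))⟩
        · exact ⟨hyS, (rWalk_support v w _).mpr (Or.inr (Or.inr rfl))⟩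
      have h3 : ({Sum.inr v, Sum.inl (⟨0, by omega⟩ : Fin (M+1)), Sum.inr w} :
          Set (Fin (M+1) ⊕ Fin B)).ncard = 3 := by
        rw [Set.ncard_eq_three]
        exact ⟨Sum.inr v, Sum.inl ⟨0, by omega⟩, Sum.inr w, by simp, hxy, by simp, rfl⟩
      have := Set.ncard_le_ncard hsub (Set.toFinite _)
      omega
    have hA1 : A.ncard ≤ 1 := by
      have h1 := hAv v hxS
      have : A = A \ {Sum.inl ⟨0, by omega⟩} := by
        rw [Set.diff_singleton_eq_self]
        rintro ⟨h, -⟩; exact hu0 h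
      rwa [this]
    omega
  · -- at most one leg in S
    push_neg at hB2
    rcases Set.eq_empty_or_nonempty Bs with hBe | ⟨x, hx⟩
    · -- no legs: use the full path
      have hT := hS (chainIJ M B ⟨0, by omega⟩ (Fin.last M) (by simp))
        (chainIJ_induced _)
      have hsub : S ⊆ S ∩ {x | x ∈ (chainIJ M B ⟨0, by omega⟩ (Fin.last M)
          (by simp)).support} := by
        rintro (i | w) hxS
        · refine ⟨hxS, (chainIJ_support _ _).mpr ⟨i, rfl, by simp, ?_⟩⟩
          show (i : ℕ) ≤ M; omega
        · exfalso
          have hmem : Sum.inr w ∈ Bs := ⟨hxS, ⟨w, rfl⟩⟩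
          rw [hBe] at hmem
          exact Set.notMem_empty _ hmem
      have := Set.ncard_le_ncard hsub (Set.toFinite _)
      omega
    · obtain ⟨hxS, v, rfl⟩ := hx
      have h1 := hAv v hxS
      have hA2 : A.ncard ≤ 2 := by
        have hsub : A ⊆ insert (Sum.inl ⟨0, by omega⟩) (A \ {Sum.inl ⟨0, by omega⟩}) := by
          intro a ha
          by_cases h : a = Sum.inl ⟨0, by omega⟩
          · exact Or.inl h
          · exact Or.inr ⟨ha, h⟩
        have := (Set.ncard_le_ncard hsub (Set.toFinite _)).trans (Set.ncard_insert_le _ _)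
        omega
      omega

theorem mpNum_myGraph (hM : 2 ≤ M) (hB : 2 ≤ B) : mpNum (myGraph M B) = B + 1 := by
  have hmem : B + 1 ∈ {n | ∃ S : Set (Fin (M+1) ⊕ Fin B), IsMpSet (myGraph M B) S ∧
      S.ncard = n} := by
    refine ⟨Set.range Sum.inr ∪ {Sum.inl (Fin.last M)}, isMpSet_lower hM, ?_⟩
    rw [Set.union_singleton, Set.ncard_insert_of_notMem (by simp) (Set.toFinite _),
      ncard_range_inr]
  have hub : ∀ k ∈ {n | ∃ S : Set (Fin (M+1) ⊕ Fin B), IsMpSet (myGraph M B) S ∧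
      S.ncard = n}, k ≤ B + 1 := by
    rintro k ⟨S, hS, rfl⟩
    exact mpSet_card_le hM hB S hS
  exact IsGreatest.csSup_eq ⟨hmem, hub⟩

lemma edist_inl_inl (i j : Fin (M+1)) :
    (myGraph M B).edist (.inl i) (.inl j) ≤ (((j : ℕ) - i) + ((i : ℕ) - j) : ℕ) := by
  rcases le_total (i : ℕ) (j : ℕ) with h | h
  · refine le_trans (Walk.edist_le (chainIJ M B i j h)) ?_
    rw [chainIJ_length h]
    exact Nat.cast_le.mpr (by omega)
  · rw [SimpleGraph.edist_comm]
    refine le_trans (Walk.edist_le (chainIJ M B j i h)) ?_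
    rw [chainIJ_length h]
    exact Nat.cast_le.mpr (by omega)

lemma edist_inr_inl (hM : 2 ≤ M) (v : Fin B) (j : Fin (M+1)) :
    (myGraph M B).edist (.inr v) (.inl j) ≤ (M : ℕ∞) := by
  set one : Fin (M+1) := ⟨1, by omega⟩ with hone
  have h1 : (myGraph M B).edist (.inr v) (.inl one) ≤ (1 : ℕ) := by
    refine le_trans (Walk.edist_le (Walk.cons (adj_inr_inl.mpr (Or.inr rfl)) Walk.nil)) ?_
    simp
  refine le_trans (SimpleGraph.edist_triangle (v := Sum.inl one)) ?_
  refine le_trans (add_le_add h1 (edist_inl_inl one j)) ?_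
  rw [← Nat.cast_add, Nat.cast_le]
  have := j.isLt
  show 1 + (((j:ℕ) - 1) + (1 - (j:ℕ))) ≤ M
  omega

lemma ediam_le (hM : 2 ≤ M) : (myGraph M B).ediam ≤ (M : ℕ∞) := by
  refine ediam_le_of_edist_le ?_
  rintro (i | v) (j | w)
  · refine le_trans (edist_inl_inl i j) (Nat.cast_le.mpr ?_)
    have := i.isLt; have := j.isLt; omega
  · rw [SimpleGraph.edist_comm]; exact edist_inr_inl hM w i
  · exact edist_inr_inl hM v j
  · set zero : Fin (M+1) := ⟨0, by omega⟩ with hzero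
    have h1 : (myGraph M B).edist (.inr v) (.inl zero) ≤ (1 : ℕ) := by
      refine le_trans (Walk.edist_le (Walk.cons (adj_inr_inl.mpr (Or.inl rfl)) Walk.nil)) ?_
      simp
    have h2 : (myGraph M B).edist (.inl zero) (.inr w) ≤ (1 : ℕ) := by
      refine le_trans (Walk.edist_le (Walk.cons (adj_inl_inr.mpr (Or.inl rfl)) Walk.nil)) ?_
      simp
    refine le_trans (SimpleGraph.edist_triangle (v := Sum.inl zero)) ?_
    refine le_trans (add_le_add h1 h2) ?_
    rw [← Nat.cast_add, Nat.cast_le]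
    omega

def ht : Fin (M+1) ⊕ Fin B → ℕ := Sum.elim Fin.val (fun _ => 1)

lemma ht_adj {x y : Fin (M+1) ⊕ Fin B} (h : (myGraph M B).Adj x y) : ht y ≤ ht x + 1 := by
  rcases x with i | v <;> rcases y with j | w
  · rw [adj_inl_inl] at h; simp only [ht, Sum.elim_inl]; omega
  · simp [ht]
  · rw [adj_inr_inl] at h; simp only [ht, Sum.elim_inr, Sum.elim_inl]; omega
  · exact absurd h not_adj_inr_inr

lemma ht_walk {x y : Fin (M+1) ⊕ Fin B} (p : (myGraph M B).Walk x y) :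
    ht y ≤ ht x + p.length := by
  induction p with
  | nil => simp
  | cons h q ih =>
    rw [Walk.length_cons]
    have := ht_adj h
    omega

lemma dist_lower (hM : 2 ≤ M) :
    M ≤ (myGraph M B).dist (.inl ⟨0, by omega⟩) (.inl (Fin.last M)) := by
  have hreach : (myGraph M B).Reachable (.inl ⟨0, by omega⟩) (.inl (Fin.last M)) :=
    ⟨chainIJ M B _ _ (by simp)⟩
  obtain ⟨p, hp⟩ := hreach.exists_walk_length_eq_dist
  have := ht_walk p
  simp only [ht, Sum.elim_inl, Fin.val_last] at this
  omega

theorem diam_myGraph (hM : 2 ≤ M) : (myGraph M B).diam = M := by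
  have hle := ediam_le (B := B) hM
  have hne : (myGraph M B).ediam ≠ ⊤ := by
    intro h; rw [h] at hle
    exact absurd (top_le_iff.mp hle) (by simp)
  have h1 : (myGraph M B).diam ≤ M := by
    have := ENat.toNat_le_toNat hle (by simp)
    simpa [SimpleGraph.diam] using this
  have h2 : M ≤ (myGraph M B).diam :=
    le_trans (dist_lower hM) (dist_le_diam hne)
  omega

end Flag

theorem flagellum_props (n a : ℕ) (ha : 3 ≤ a) (han : a ≤ n - 2) :
    Fintype.card (Fin (n - a + 1) ⊕ Fin (a - 1)) = n ∧
    mpNum (flagellumGraph n a) = a ∧ (flagellumGraph n a).diam = n - a := by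
  have hG : flagellumGraph n a = Flag.myGraph (n - a) (a - 1) := by
    unfold flagellumGraph Flag.myGraph
    congr 1
    funext u v
    cases u <;> cases v <;> rfl
  have hM : 2 ≤ n - a := by omega
  have hB : 2 ≤ a - 1 := by omega
  refine ⟨?_, ?_, ?_⟩
  · rw [Fintype.card_sum, Fintype.card_fin, Fintype.card_fin]; omega
  · rw [hG, Flag.mpNum_myGraph hM hB]; omega
  · rw [hG, Flag.diam_myGraph hM]
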